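/- arXiv:2308.13138 — 3 statements merged into one kernel-verified Lean document; each statement's English description precedes it below -/
import Mathlib

section
/- Let G be a topological group with the virtual Rokhlin property, and suppose N and N' are both closed finite-index subgroups of G with the Rokhlin property. Then N = N'. -/
/-- A topological group has the Rokhlin property if some element has dense
conjugacy class. -/
def RokhlinProperty (G : Type*) [Group G] [TopologicalSpace G] : Prop :=
  ∃ g : G, Dense {x : G | ∃ h : G, h * g * h⁻¹ = x}

/-- A topological group has the virtual Rokhlin property if it contains an open
finite-index subgroup with the Rokhlin property. -/
def VirtualRokhlinProperty (G : Type*) [Group G] [TopologicalSpace G] : Prop :=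
  ∃ N : Subgroup G, IsOpen (N : Set G) ∧ N.FiniteIndex ∧ RokhlinProperty N

/-- A group with the Rokhlin property has no proper open normal subgroup. -/
lemma rokhlin_top {H : Type*} [Group H] [TopologicalSpace H] [IsTopologicalGroup H]
    (hR : RokhlinProperty H) (M : Subgroup H) (hn : M.Normal)
    (ho : IsOpen (M : Set H)) : M = ⊤ := by
  obtain ⟨g, hg⟩ := hR
  have hne : ((M : Set H) ∩ {x : H | ∃ h : H, h * g * h⁻¹ = x}).Nonempty :=
    hg.inter_open_nonempty _ ho ⟨1, M.one_mem⟩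
  obtain ⟨x, hxM, ⟨h, rfl⟩⟩ := hne
  have hgM : g ∈ M := by
    have := hn.conj_mem _ hxM h⁻¹
    simpa [mul_assoc] using this
  have hsub : {x : H | ∃ h : H, h * g * h⁻¹ = x} ⊆ (M : Set H) := by
    rintro _ ⟨h, rfl⟩
    exact hn.conj_mem g hgM h
  have hcl : IsClosed (M : Set H) := M.isClosed_of_isOpen ho
  have : (M : Set H) = Set.univ := by
    apply Set.eq_univ_of_univ_subset
    rw [← hcl.closure_eq]
    calc Set.univ = closure {x : H | ∃ h : H, h * g * h⁻¹ = x} := hg.closure_eq.symm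
    _ ⊆ closure (M : Set H) := closure_mono hsub
  exact Subgroup.coe_eq_univ.mp this

lemma rokhlin_le {G : Type*} [Group G] [TopologicalSpace G] [IsTopologicalGroup G]
    (N N' : Subgroup G)
    (hNR : RokhlinProperty N)
    (hN'c : IsClosed (N' : Set G)) (hN'fi : N'.FiniteIndex) : N ≤ N' := by
  haveI := hN'fi
  set K : Subgroup N := N'.subgroupOf N with hK
  have hKc : IsClosed (K : Set N) := by
    have : (K : Set N) = (Subtype.val : N → G) ⁻¹' (N' : Set G) := rfl
    rw [this]
    exact hN'c.preimage continuous_subtype_val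
  haveI : K.FiniteIndex := Subgroup.instFiniteIndex_subgroupOf N' N
  have hMc : IsClosed ((K.normalCore : Subgroup N) : Set N) :=
    Subgroup.normalCore_isClosed K hKc
  have hMo : IsOpen ((K.normalCore : Subgroup N) : Set N) :=
    Subgroup.isOpen_of_isClosed_of_finiteIndex _ hMc
  have htop : K.normalCore = ⊤ :=
    rokhlin_top hNR _ (Subgroup.normalCore_normal K) hMo
  have hKtop : K = ⊤ := top_le_iff.mp (htop ▸ Subgroup.normalCore_le K)
  exact (Subgroup.subgroupOf_eq_top.mp hKtop)

theorem stmt3 {G : Type*} [Group G] [TopologicalSpace G] [IsTopologicalGroup G]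
    (hvr : VirtualRokhlinProperty G)
    (N N' : Subgroup G)
    (hNc : IsClosed (N : Set G)) (hNfi : N.FiniteIndex) (hNR : RokhlinProperty N)
    (hN'c : IsClosed (N' : Set G)) (hN'fi : N'.FiniteIndex) (hN'R : RokhlinProperty N') :
    N = N' := by
  exact le_antisymm (rokhlin_le N N' hNR hN'c hN'fi) (rokhlin_le N' N hN'R hNc hNfi)
end

section
/- Let G be a Polish group. If for any two nonempty open subsets U, V ⊆ G there exists σ ∈ G with U ∩ σVσ⁻¹ ≠ ∅, then G has an element with dense conjugacy class. -/
theorem stmt7 {G : Type*} [Group G] [TopologicalSpace G] [IsTopologicalGroup G]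
    [PolishSpace G]
    (hjep : ∀ U V : Set G, IsOpen U → IsOpen V → U.Nonempty → V.Nonempty →
      ∃ σ : G, (U ∩ ((fun v => σ * v * σ⁻¹) '' V)).Nonempty) :
    ∃ g : G, Dense {x : G | ∃ h : G, h * g * h⁻¹ = x} := by
  letI := TopologicalSpace.upgradeIsCompletelyMetrizable G
  obtain ⟨b, hbc, hbne, hb⟩ := TopologicalSpace.exists_countable_basis G
  set A : Set G → Set G := fun V => ⋃ h : G, (fun g => h * g * h⁻¹) ⁻¹' V with hA
  have hcont : ∀ h : G, Continuous (fun g : G => h * g * h⁻¹) := fun h =>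
    (continuous_const.mul continuous_id).mul continuous_const
  have hAopen : ∀ V, IsOpen V → IsOpen (A V) := fun V hV =>
    isOpen_iUnion fun h => hV.preimage (hcont h)
  have hAdense : ∀ V ∈ b, Dense (A V) := by
    intro V hV
    rw [dense_iff_inter_open]
    intro U hU hUne
    have hVopen : IsOpen V := hb.isOpen hV
    have hVne : V.Nonempty := Set.nonempty_iff_ne_empty.mpr (by rintro rfl; exact hbne hV)
    obtain ⟨σ, x, hxU, v, hvV, hvx⟩ := hjep U V hU hVopen hUne hVne
    refine ⟨x, hxU, Set.mem_iUnion.mpr ⟨σ⁻¹, ?_⟩⟩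
    simp only [Set.mem_preimage, inv_inv]
    have : σ⁻¹ * x * σ = v := by
      rw [← hvx]; group
    rw [this]; exact hvV
  have hd : Dense (⋂₀ (A '' b)) := by
    apply dense_sInter_of_isOpen
    · rintro s ⟨V, hV, rfl⟩; exact hAopen V (hb.isOpen hV)
    · exact hbc.image A
    · rintro s ⟨V, hV, rfl⟩; exact hAdense V hV
  obtain ⟨g, hg⟩ := hd.nonempty
  refine ⟨g, hb.dense_iff.mpr ?_⟩
  intro o ho hone
  have : g ∈ A o := hg (A o) ⟨o, ho, rfl⟩
  obtain ⟨h, hh⟩ := Set.mem_iUnion.mp this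
  exact ⟨h * g * h⁻¹, hh, h, rfl⟩
end

section
/- Let G be a completely metrizable topological group with the virtual Rokhlin property and let H be a cm-slender group. Then every (abstract) group homomorphism φ : G → H is trivial. -/
universe u v

/-- A topological space is completely metrizable if its topology is induced by a
complete metric. -/
def IsCompletelyMetrizable (X : Type*) [t : TopologicalSpace X] : Prop :=
  ∃ m : MetricSpace X, m.toUniformSpace.toTopologicalSpace = t ∧
    @CompleteSpace X m.toUniformSpace

/-- A group `H` is cm-slender if the kernel of every abstract group homomorphism
from a completely metrizable topological group to `H` is open. -/
def CmSlender (H : Type v) [Group H] : Prop :=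
  ∀ (G : Type u) [Group G] [TopologicalSpace G] [IsTopologicalGroup G],
    IsCompletelyMetrizable G → ∀ φ : G →* H, IsOpen (φ.ker : Set G)

open Filter in
/-- A cm-slender group is torsion-free. -/
lemma cmSlender_torsionFree {H : Type v} [Group H] (hH : CmSlender.{u} H)
    {h : H} {n : ℕ} (hn : 0 < n) (hp : h ^ n = 1) : h = 1 := by
  by_contra hne
  have hfin : IsOfFinOrder h := isOfFinOrder_iff_pow_eq_one.2 ⟨n, hn, hp⟩
  have hmpos : 0 < orderOf h := hfin.orderOf_pos
  set m := orderOf h with hm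
  have hm1 : 1 < m := by
    have hne1 : m ≠ 1 := fun h1 => hne (orderOf_eq_one_iff.mp (hm ▸ h1))
    omega
  haveI : NeZero m := ⟨hmpos.ne'⟩
  classical
  -- the coefficient group, with the discrete uniformity
  let C := Multiplicative (ZMod m)
  letI uC : UniformSpace C := ⊥
  haveI hdC : DiscreteTopology C := discreteTopology_of_discrete_uniformity rfl
  haveI : IsTopologicalGroup C :=
    { continuous_mul := continuous_of_discreteTopology
      continuous_inv := continuous_of_discreteTopology }
  haveI cC : @CompleteSpace C uC := by
    refine ⟨fun {l} hl => ?_⟩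
    obtain ⟨x, hx⟩ := (by haveI : DiscreteUniformity C := ⟨rfl⟩; exact DiscreteUniformity.eq_pure_of_cauchy hl)
    exact ⟨x, hx ▸ pure_le_nhds x⟩
  -- the product group `A` and its universe lift `G₀`
  let A : Type := ℕ → C
  let mA : MetricSpace A := PiNat.metricSpaceOfDiscreteUniformity fun _ => rfl
  haveI cA : @CompleteSpace A (Pi.uniformSpace _) :=
    inferInstanceAs (@CompleteSpace A (Pi.uniformSpace _))
  let G₀ : Type u := ULift.{u} A
  let mG : MetricSpace G₀ := MetricSpace.induced ULift.down ULift.down_injective mA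
  have hGcm : IsCompletelyMetrizable G₀ := by
    refine ⟨mG, ?_, ?_⟩
    · rfl
    · letI : UniformSpace A := Pi.uniformSpace _
      exact completeSpace_ulift_iff.2 cA
  -- the ultrafilter limit homomorphism `A →* H`
  let U : Ultrafilter ℕ := Filter.hyperfilter ℕ
  have hex : ∀ x : A, ∃ c : C, {i | x i = c} ∈ U := by
    intro x
    obtain ⟨c, hc⟩ := (U.map x).eq_pure_of_finite
    refine ⟨c, ?_⟩
    have : {c} ∈ U.map x := by rw [hc]; exact rfl
    simpa [Set.preimage, Set.mem_singleton_iff] using this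
  let lim : A → C := fun x => (hex x).choose
  have hlim : ∀ x : A, {i | x i = lim x} ∈ U := fun x => (hex x).choose_spec
  have hinter : ∀ s t : Set ℕ, s ∈ U → t ∈ U → s ∩ t ∈ U :=
    fun s t hs ht => Filter.inter_mem hs ht
  have huniq : ∀ (x : A) (c : C), {i | x i = c} ∈ U → lim x = c := by
    intro x c hc
    obtain ⟨i, hi1, hi2⟩ := Ultrafilter.nonempty_of_mem (hinter _ _ (hlim x) hc)
    exact hi1 ▸ hi2
  have hpowadd : ∀ a b : ZMod m, h ^ (a + b).val = h ^ a.val * h ^ b.val := by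
    intro a b
    rw [ZMod.val_add]
    show h ^ ((a.val + b.val) % orderOf h) = _
    rw [pow_mod_orderOf, pow_add]
  have huniv : {i | (1 : A) i = (1 : C)} ∈ U := by
    have : {i | (1 : A) i = (1 : C)} = Set.univ := by
      ext i
      simp only [Set.mem_setOf_eq, Set.mem_univ, iff_true]
      exact rfl
    rw [this]
    exact Filter.univ_mem
  let fA : A →* H :=
    { toFun := fun x => h ^ (Multiplicative.toAdd (lim x)).val
      map_one' := by
        have h1 : lim (1 : A) = 1 := huniq _ _ huniv
        show h ^ (Multiplicative.toAdd (lim (1 : A))).val = 1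
        rw [h1, toAdd_one, ZMod.val_zero, pow_zero]
      map_mul' := by
        intro x y
        have hxy : lim (x * y) = lim x * lim y := by
          refine huniq _ _ (Filter.mem_of_superset (hinter _ _ (hlim x) (hlim y)) ?_)
          rintro i ⟨hix, hiy⟩
          simp only [Set.mem_setOf_eq] at hix hiy ⊢
          show x i * y i = lim x * lim y
          rw [hix, hiy]
        show h ^ (Multiplicative.toAdd (lim (x * y))).val =
          h ^ (Multiplicative.toAdd (lim x)).val * h ^ (Multiplicative.toAdd (lim y)).val
        rw [hxy]
        exact hpowadd _ _ }
  let f : G₀ →* H := fA.comp (MulEquiv.ulift.toMonoidHom)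
  have hopen : IsOpen (f.ker : Set G₀) := hH G₀ hGcm f
  have hopenA : IsOpen (ULift.up ⁻¹' (f.ker : Set G₀) : Set A) :=
    hopen.preimage continuous_uliftUp
  have h1mem : (1 : A) ∈ ULift.up ⁻¹' (f.ker : Set G₀) := by
    show f (ULift.up 1) = 1
    exact f.map_one
  rw [isOpen_pi_iff] at hopenA
  obtain ⟨I, uu, hu, hsub⟩ := hopenA 1 h1mem
  -- the element `y` agreeing with 1 on I and with the generator elsewhere
  let y : A := fun i => if i ∈ I then 1 else Multiplicative.ofAdd (1 : ZMod m)
  have hy : y ∈ ULift.up ⁻¹' (f.ker : Set G₀) := by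
    apply hsub
    rw [Set.mem_pi]
    intro i hi
    have hiI : i ∈ I := hi
    show (if i ∈ I then 1 else Multiplicative.ofAdd (1 : ZMod m)) ∈ uu i
    rw [if_pos hiI]
    exact (hu i hiI).2
  have hIc : (↑I : Set ℕ)ᶜ ∈ U :=
    Filter.compl_mem_hyperfilter_of_finite I.finite_toSet
  have hylim : lim y = Multiplicative.ofAdd (1 : ZMod m) := by
    refine huniq _ _ (Filter.mem_of_superset hIc ?_)
    intro i hi
    simp only [Set.mem_compl_iff, Finset.mem_coe] at hi
    simp only [Set.mem_setOf_eq, y, if_neg hi]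
  haveI : Fact (1 < m) := ⟨hm1⟩
  have hfy : f (ULift.up y) = h := by
    show h ^ (Multiplicative.toAdd (lim y)).val = h
    rw [hylim]
    show h ^ (1 : ZMod m).val = h
    rw [ZMod.val_one, pow_one]
  have : f (ULift.up y) = 1 := hy
  rw [hfy] at this
  exact hne this

theorem stmt13 {G : Type u} [Group G] [TopologicalSpace G] [IsTopologicalGroup G]
    (hcm : IsCompletelyMetrizable G)
    (hvr : ∃ N : Subgroup G, IsOpen (N : Set G) ∧ N.FiniteIndex ∧
      ∃ g : N, Dense {x : N | ∃ h : N, h * g * h⁻¹ = x})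
    {H : Type v} [Group H] (hH : CmSlender.{u} H)
    (φ : G →* H) :
    ∀ g : G, φ g = 1 := by
  obtain ⟨N, hNopen, hNfin, g, hdense⟩ := hvr
  -- φ vanishes on N
  have hker_open : IsOpen (φ.ker : Set G) := hH G hcm φ
  let ψ : (↥N) →* H := φ.comp N.subtype
  have hψopen : IsOpen (ψ.ker : Set ↥N) := by
    have : (ψ.ker : Set ↥N) = Subtype.val ⁻¹' (φ.ker : Set G) := rfl
    rw [this]
    exact hker_open.preimage continuous_subtype_val
  have hψclosed : IsClosed (ψ.ker : Set ↥N) := ψ.ker.isClosed_of_isOpen hψopen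
  have hg1 : φ ↑g = 1 := by
    obtain ⟨x, hxK, hxS⟩ := hdense.inter_open_nonempty _ hψopen ⟨1, ψ.ker.one_mem⟩
    obtain ⟨k, rfl⟩ := hxS
    have : ψ (k * g * k⁻¹) = 1 := hxK
    rw [map_mul, map_mul, map_inv] at this
    have : ψ g = 1 := (conj_eq_one_iff).mp this
    exact this
  have hSsub : {x : ↥N | ∃ h : ↥N, h * g * h⁻¹ = x} ⊆ (ψ.ker : Set ↥N) := by
    rintro _ ⟨k, rfl⟩
    show ψ (k * g * k⁻¹) = 1
    rw [map_mul, map_mul, map_inv]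
    have : ψ g = 1 := hg1
    rw [this, mul_one, mul_inv_cancel]
  have hNker : ∀ x : ↥N, φ ↑x = 1 := by
    intro x
    have : x ∈ closure {x : ↥N | ∃ h : ↥N, h * g * h⁻¹ = x} := by
      rw [hdense.closure_eq]; trivial
    exact closure_minimal hSsub hψclosed this
  intro g₀
  obtain ⟨k, hkpos, _, hk⟩ := Subgroup.exists_pow_mem_of_index_ne_zero hNfin.index_ne_zero g₀
  have : φ g₀ ^ k = 1 := by
    rw [← map_pow]
    exact hNker ⟨g₀ ^ k, hk⟩
  exact cmSlender_torsionFree hH hkpos this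
end
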